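/- arXiv:1907.05610 — 5 statements merged into one kernel-verified Lean document; each statement's English description precedes it below -/
import Mathlib

section
/- For every z₁ ∈ ℂ, the point (0, 0, z₁) ∈ ℂ³ can be reached from the origin (0, 0, 0) by a finite chain (in fact a chain of at most three) of entire holomorphic curves γ : ℂ → ℂ³ admissible for the 1-form x dy − y dx − dz, i.e., satisfying γ₁(t)·γ₂′(t) − γ₂(t)·γ₁′(t) − γ₃′(t) = 0 for all t ∈ ℂ. -/
/-- The entire curve `(γ₁, γ₂, γ₃) : ℂ → ℂ³` is holomorphic and admissible for the
1-form `x dy − y dx − dz`, i.e. `γ₁(t)·γ₂′(t) − γ₂(t)·γ₁′(t) − γ₃′(t) = 0` on ℂ. -/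
def EntireAdmissible (γ₁ γ₂ γ₃ : ℂ → ℂ) : Prop :=
  Differentiable ℂ γ₁ ∧ Differentiable ℂ γ₂ ∧ Differentiable ℂ γ₃ ∧
  ∀ t : ℂ, γ₁ t * deriv γ₂ t - γ₂ t * deriv γ₁ t - deriv γ₃ t = 0

/-- `q` is reachable from `p` by a chain of `m + 1` entire holomorphic curves
admissible for `x dy − y dx − dz`. -/
def EntireChain (m : ℕ) (γ₁ γ₂ γ₃ : Fin (m + 1) → ℂ → ℂ) (p q : ℂ × ℂ × ℂ) : Prop :=
  (∀ i, EntireAdmissible (γ₁ i) (γ₂ i) (γ₃ i)) ∧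
  (γ₁ 0 0, γ₂ 0 0, γ₃ 0 0) = p ∧
  (∀ i : Fin m,
    (γ₁ i.castSucc 1, γ₂ i.castSucc 1, γ₃ i.castSucc 1) =
    (γ₁ i.succ 0, γ₂ i.succ 0, γ₃ i.succ 0)) ∧
  (γ₁ (Fin.last m) 1, γ₂ (Fin.last m) 1, γ₃ (Fin.last m) 1) = q

private lemma hd1 (z₁ : ℂ) (t : ℂ) :
    HasDerivAt (fun t : ℂ => -30 * z₁ * (t ^ 3 - t ^ 2)) (-30 * z₁ * (3 * t ^ 2 - 2 * t)) t := by
  have := ((hasDerivAt_pow 3 t).sub (hasDerivAt_pow 2 t)).const_mul (-30 * z₁)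
  refine this.congr_deriv ?_
  push_cast; ring

private lemma hd2 (t : ℂ) :
    HasDerivAt (fun t : ℂ => t ^ 2 - t) (2 * t - 1) t := by
  have := (hasDerivAt_pow 2 t).sub (hasDerivAt_id t)
  refine this.congr_deriv ?_
  push_cast; ring

private lemma hd3 (z₁ : ℂ) (t : ℂ) :
    HasDerivAt (fun t : ℂ => z₁ * (6 * t ^ 5 - 15 * t ^ 4 + 10 * t ^ 3))
      (z₁ * (30 * t ^ 4 - 60 * t ^ 3 + 30 * t ^ 2)) t := by
  have h5 := (hasDerivAt_pow 5 t).const_mul (6 : ℂ)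
  have h4 := (hasDerivAt_pow 4 t).const_mul (15 : ℂ)
  have h3 := (hasDerivAt_pow 3 t).const_mul (10 : ℂ)
  have := ((h5.sub h4).add h3).const_mul z₁
  refine this.congr_deriv ?_
  push_cast; ring

/-- Every point `(0, 0, z₁)` on the `z`-axis is reachable from the origin by a chain
of at most three entire holomorphic curves admissible for `x dy − y dx − dz`. -/
theorem z_axis_reachable_from_origin (z₁ : ℂ) :
    ∃ m : ℕ, m + 1 ≤ 3 ∧ ∃ γ₁ γ₂ γ₃ : Fin (m + 1) → ℂ → ℂ,
      EntireChain m γ₁ γ₂ γ₃ (0, 0, 0) (0, 0, z₁) := by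
  refine ⟨0, by norm_num,
    (fun _ t => -30 * z₁ * (t ^ 3 - t ^ 2)),
    (fun _ t => t ^ 2 - t),
    (fun _ t => z₁ * (6 * t ^ 5 - 15 * t ^ 4 + 10 * t ^ 3)), ?_, ?_, ?_, ?_⟩
  · intro i
    refine ⟨fun t => (hd1 z₁ t).differentiableAt,
      fun t => (hd2 t).differentiableAt,
      fun t => (hd3 z₁ t).differentiableAt, fun t => ?_⟩
    rw [(hd1 z₁ t).deriv, (hd2 t).deriv, (hd3 z₁ t).deriv]
    ring
  · norm_num
  · intro i; exact absurd i.2 (by omega)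
  · norm_num
end

section
/- Any two points p, q ∈ ℂ³ can be connected by a finite chain of entire holomorphic curves admissible for the 1-form x dy − y dx − dz; that is, the whole space ℂ³ is connected by holomorphic integral curves of the distribution {ker(x dy − y dx − dz)}. -/
lemma deriv_affine (α β : ℂ) (t : ℂ) : deriv (fun s => α + β * s) t = β := by
  have h : HasDerivAt (fun s => α + β * s) β t := by
    simpa using ((hasDerivAt_id t).const_mul β).const_add α
  exact h.deriv

lemma diff_affine (α β : ℂ) : Differentiable ℂ (fun s => α + β * s) := by
  fun_prop

lemma lineX (x₀ y₀ z₀ d : ℂ) :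
    EntireAdmissible (fun t => x₀ + d * t) (fun _ => y₀) (fun t => z₀ + (-(y₀*d)) * t) := by
  refine ⟨diff_affine _ _, differentiable_const _, diff_affine _ _, fun t => ?_⟩
  simp only [deriv_affine, deriv_const]; ring

lemma lineY (x₀ y₀ z₀ d : ℂ) :
    EntireAdmissible (fun _ => x₀) (fun t => y₀ + d * t) (fun t => z₀ + (x₀*d) * t) := by
  refine ⟨differentiable_const _, diff_affine _ _, diff_affine _ _, fun t => ?_⟩
  simp only [deriv_affine, deriv_const]; ring

/-- ℂ³ is connected by finite chains of entire holomorphic curves admissible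
for the 1-form `x dy − y dx − dz`. -/
theorem C3_connected_by_admissible_curves (p q : ℂ × ℂ × ℂ) :
    ∃ (m : ℕ) (γ₁ γ₂ γ₃ : Fin (m + 1) → ℂ → ℂ), EntireChain m γ₁ γ₂ γ₃ p q := by
  obtain ⟨a, b, c⟩ := p
  obtain ⟨a', b', c'⟩ := q
  set B : ℂ := b' + 1 with hB
  set s : ℂ := (c + a*(B-b) + a*B - a'*b' - c')/2 with hs
  set z₁ : ℂ := c + a*(B-b) with hz1
  set z₂ : ℂ := z₁ - B*(s-a) with hz2
  set z₃ : ℂ := z₂ + s*(b'-B) with hz3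
  refine ⟨3,
    fun i t => if i.1 = 0 then a else if i.1 = 1 then a + (s-a)*t else
               if i.1 = 2 then s else s + (a'-s)*t,
    fun i t => if i.1 = 0 then b + (B-b)*t else if i.1 = 1 then B else
               if i.1 = 2 then B + (b'-B)*t else b',
    fun i t => if i.1 = 0 then c + (a*(B-b))*t else if i.1 = 1 then z₁ + (-(B*(s-a)))*t else
               if i.1 = 2 then z₂ + (s*(b'-B))*t else z₃ + (-(b'*(a'-s)))*t,
    ?_, ?_, ?_, ?_⟩
  · intro i; fin_cases i
    · exact lineY a b c (B-b)
    · exact lineX a B z₁ (s-a)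
    · exact lineY s B z₂ (b'-B)
    · exact lineX s b' z₃ (a'-s)
  · simp
  · intro i; fin_cases i <;>
      · refine Prod.ext ?_ (Prod.ext ?_ ?_) <;> · show _ = _; norm_num [hz2, hz3]; try ring
  · refine Prod.ext ?_ (Prod.ext ?_ ?_) <;> (show _ = _; norm_num)
    rw [hz3, hz2, hs, hz1, hB]; ring
end

section
/- For every point (x₁, y₁, z₁) ∈ ℂ³ with x₁ ≠ 0, there exists a single entire holomorphic curve γ : ℂ → ℂ³ admissible for the 1-form x dy − y dx − dz such that γ(0) = (0, 0, 0) and γ(1) = (x₁, y₁, z₁). (One may take γ(t) = (x₁ t, y₁ t² − c t(t−1), (1/3) x₁ y₁ t³ − (1/3) c x₁ t³) where c ∈ ℂ solves z₁ = (1/3) x₁ y₁ − (1/3) c x₁.) -/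
/-- Every point with `x₁ ≠ 0` is reachable from the origin by a single entire
holomorphic curve admissible for `x dy − y dx − dz`. -/
theorem single_curve_reaches_point (x₁ y₁ z₁ : ℂ) (hx₁ : x₁ ≠ 0) :
    ∃ γ₁ γ₂ γ₃ : ℂ → ℂ, EntireAdmissible γ₁ γ₂ γ₃ ∧
      (γ₁ 0, γ₂ 0, γ₃ 0) = (0, 0, 0) ∧ (γ₁ 1, γ₂ 1, γ₃ 1) = (x₁, y₁, z₁) := by
  set c : ℂ := y₁ - 3 * z₁ / x₁ with hc
  refine ⟨fun t => x₁ * t, fun t => y₁ * t ^ 2 - c * (t ^ 2 - t),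
    fun t => (x₁ * (y₁ - c) / 3) * t ^ 3, ⟨?_, ?_, ?_, ?_⟩, ?_, ?_⟩
  · fun_prop
  · fun_prop
  · fun_prop
  · intro t
    have h1 : deriv (fun t : ℂ => x₁ * t) t = x₁ := by
      simpa using ((hasDerivAt_id t).const_mul x₁).deriv
    have h2 : deriv (fun t : ℂ => y₁ * t ^ 2 - c * (t ^ 2 - t)) t
        = y₁ * (2 * t) - c * (2 * t - 1) := by
      have : HasDerivAt (fun t : ℂ => y₁ * t ^ 2 - c * (t ^ 2 - t))
          (y₁ * (2 * t) - c * (2 * t - 1)) t := by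
        have ht2 : HasDerivAt (fun t : ℂ => t ^ 2) (2 * t) t := by
          simpa using hasDerivAt_pow 2 t
        exact ((ht2.const_mul y₁).sub ((ht2.sub (hasDerivAt_id t)).const_mul c))
      exact this.deriv
    have h3 : deriv (fun t : ℂ => (x₁ * (y₁ - c) / 3) * t ^ 3) t
        = (x₁ * (y₁ - c) / 3) * (3 * t ^ 2) := by
      have : HasDerivAt (fun t : ℂ => (x₁ * (y₁ - c) / 3) * t ^ 3)
          ((x₁ * (y₁ - c) / 3) * (3 * t ^ 2)) t := by
        have := hasDerivAt_pow 3 t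
        simpa using (this.const_mul (x₁ * (y₁ - c) / 3))
      exact this.deriv
    rw [h1, h2, h3]
    ring
  · simp
  · have hz : (x₁ * (y₁ - c) / 3) = z₁ := by
      field_simp [hc]
      rw [hc, sub_sub_cancel]
      field_simp
    simp [hz]
end

section
/- For every point (x₁, y₁, z₁) ∈ ℂ³ with x₁ ≠ 0, there exists a single entire holomorphic curve γ : ℂ → ℂ³ admissible for the 1-form x dy + dz such that γ(0) = (0, 0, 0) and γ(1) = (x₁, y₁, z₁). (Such a curve can be produced by a generating function of the form S(x) = a x² + b x³, taking γ(t) = (x₁ t, S′(x₁ t), S(x₁ t) − x₁ t·S′(x₁ t)), since the linear system 2a x₁ + 3b x₁² = y₁, −a x₁² − 2b x₁³ = z₁ has determinant −x₁⁴ ≠ 0.) -/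
/-- The entire curve `(γ₁, γ₂, γ₃) : ℂ → ℂ³` is holomorphic and admissible for the
1-form `x dy + dz`, i.e. `γ₁(t)·γ₂′(t) + γ₃′(t) = 0` for all `t ∈ ℂ`. -/
def EntireAdmissibleContact (γ₁ γ₂ γ₃ : ℂ → ℂ) : Prop :=
  Differentiable ℂ γ₁ ∧ Differentiable ℂ γ₂ ∧ Differentiable ℂ γ₃ ∧
  ∀ t : ℂ, γ₁ t * deriv γ₂ t + deriv γ₃ t = 0

lemma quad_hasDerivAt (p q : ℂ) (t : ℂ) :
    HasDerivAt (fun t : ℂ => p * t + q * t ^ 2) (p + 2 * q * t) t := by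
  have h1 : HasDerivAt (fun t : ℂ => p * t) p t := by
    simpa using (hasDerivAt_id t).const_mul p
  have h2 : HasDerivAt (fun t : ℂ => q * t ^ 2) (q * (2 * t)) t := by
    simpa using (hasDerivAt_pow 2 t).const_mul q
  have := h1.add h2
  refine this.congr_deriv ?_
  ring

lemma cub_hasDerivAt (p q : ℂ) (t : ℂ) :
    HasDerivAt (fun t : ℂ => p * t ^ 2 + q * t ^ 3) (2 * p * t + 3 * q * t ^ 2) t := by
  have h1 : HasDerivAt (fun t : ℂ => p * t ^ 2) (p * (2 * t)) t := by
    simpa using (hasDerivAt_pow 2 t).const_mul p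
  have h2 : HasDerivAt (fun t : ℂ => q * t ^ 3) (q * (3 * t ^ 2)) t := by
    simpa using (hasDerivAt_pow 3 t).const_mul q
  have := h1.add h2
  refine this.congr_deriv ?_
  ring

/-- Every point with `x₁ ≠ 0` is reachable from the origin by a single entire
holomorphic curve admissible for the contact form `x dy + dz`. -/
theorem single_contact_curve_reaches_point (x₁ y₁ z₁ : ℂ) (hx₁ : x₁ ≠ 0) :
    ∃ γ₁ γ₂ γ₃ : ℂ → ℂ, EntireAdmissibleContact γ₁ γ₂ γ₃ ∧
      (γ₁ 0, γ₂ 0, γ₃ 0) = (0, 0, 0) ∧ (γ₁ 1, γ₂ 1, γ₃ 1) = (x₁, y₁, z₁) := by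
  set a : ℂ := (2 * y₁ * x₁ + 3 * z₁) / x₁ ^ 2 with ha
  set b : ℂ := -(2 * z₁ + x₁ * y₁) / x₁ ^ 3 with hb
  refine ⟨fun t => x₁ * t, fun t => (2 * a * x₁) * t + (3 * b * x₁ ^ 2) * t ^ 2,
    fun t => (-(a * x₁ ^ 2)) * t ^ 2 + (-2 * b * x₁ ^ 3) * t ^ 3, ?_, ?_, ?_⟩
  · refine ⟨fun t => ((hasDerivAt_id t).const_mul x₁).differentiableAt,
      fun t => (quad_hasDerivAt _ _ t).differentiableAt,
      fun t => (cub_hasDerivAt _ _ t).differentiableAt, fun t => ?_⟩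
    rw [(quad_hasDerivAt (2 * a * x₁) (3 * b * x₁ ^ 2) t).deriv,
      (cub_hasDerivAt (-(a * x₁ ^ 2)) (-2 * b * x₁ ^ 3) t).deriv]
    ring
  · simp
  · simp only [Prod.mk.injEq, mul_one, one_pow]
    refine ⟨trivial, ?_, ?_⟩
    · rw [ha, hb]
      field_simp
      ring
    · rw [ha, hb]
      field_simp
      ring
end

section
/- For n ≥ 2, the distribution of complex tangents is completely non-integrable within each sphere: any two points p, q on the unit sphere S = {w ∈ ℂⁿ : ‖w‖ = 1} can be connected by a finite chain of differentiable paths γ : [0, 1] → S satisfying ⟨γ′(t), γ(t)⟩ = 0 for all t, i.e., real one-dimensional paths that are at each moment tangent to the complex tangent space of the sphere. -/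
/-- `γ` is a differentiable path `[0,1] → ℂⁿ` lying on the unit sphere whose
velocity at every moment lies in the complex tangent space of the sphere, i.e.
`⟪γ′(t), γ(t)⟫ = 0` for the Hermitian inner product. -/
def ComplexTangentSpherePath (n : ℕ) (γ : ℝ → EuclideanSpace ℂ (Fin n)) : Prop :=
  DifferentiableOn ℝ γ (Set.Icc 0 1) ∧
  (∀ t ∈ Set.Icc (0 : ℝ) 1, ‖γ t‖ = 1) ∧
  (∀ t ∈ Set.Icc (0 : ℝ) 1,
    inner (𝕜 := ℂ) (derivWithin γ (Set.Icc 0 1) t) (γ t) = 0)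

lemma arc_hasDerivAt (θ : ℝ) {n : ℕ} (a v : EuclideanSpace ℂ (Fin n)) (t : ℝ) :
    HasDerivAt (fun t => ((Real.cos (θ * t) : ℝ) : ℂ) • a + ((Real.sin (θ * t) : ℝ) : ℂ) • v)
      (((-Real.sin (θ * t) * θ : ℝ) : ℂ) • a + ((Real.cos (θ * t) * θ : ℝ) : ℂ) • v) t := by
  have hθ : HasDerivAt (fun t : ℝ => θ * t) θ t := by
    simpa using (hasDerivAt_id t).const_mul θ
  have hc : HasDerivAt (fun t : ℝ => Real.cos (θ * t)) (-Real.sin (θ * t) * θ) t :=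
    (Real.hasDerivAt_cos (θ * t)).comp t hθ
  have hs : HasDerivAt (fun t : ℝ => Real.sin (θ * t)) (Real.cos (θ * t) * θ) t :=
    (Real.hasDerivAt_sin (θ * t)).comp t hθ
  exact ((hc.ofReal_comp).smul_const a).add ((hs.ofReal_comp).smul_const v)

lemma arc_path {n : ℕ} (θ : ℝ) (a v : EuclideanSpace ℂ (Fin n))
    (ha : ‖a‖ = 1) (hv : ‖v‖ = 1) (hva : inner (𝕜 := ℂ) v a = 0) :
    ComplexTangentSpherePath n
      (fun t => ((Real.cos (θ * t) : ℝ) : ℂ) • a + ((Real.sin (θ * t) : ℝ) : ℂ) • v) := by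
  have hav : inner (𝕜 := ℂ) a v = 0 := by
    rw [← inner_conj_symm, hva, map_zero]
  have haa : inner (𝕜 := ℂ) a a = 1 := by
    rw [inner_self_eq_norm_sq_to_K, ha]; norm_num
  have hvv : inner (𝕜 := ℂ) v v = 1 := by
    rw [inner_self_eq_norm_sq_to_K, hv]; norm_num
  refine ⟨fun t _ => (arc_hasDerivAt θ a v t).differentiableAt.differentiableWithinAt, ?_, ?_⟩
  · intro t _
    set x := ((Real.cos (θ * t) : ℝ) : ℂ) • a + ((Real.sin (θ * t) : ℝ) : ℂ) • v with hx
    have h1 : inner (𝕜 := ℂ) x x = 1 := by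
      rw [hx]
      simp only [inner_add_left, inner_add_right, inner_smul_left, inner_smul_right,
        haa, hvv, hva, hav, Complex.conj_ofReal, mul_zero, mul_one, add_zero, zero_add]
      norm_cast
      rw [← Real.sin_sq_add_cos_sq (θ * t)]; ring
    have h2 := inner_self_eq_norm_sq_to_K (𝕜 := ℂ) x
    rw [h1] at h2
    have h3 : ‖x‖ ^ 2 = (1 : ℝ) := by
      apply Complex.ofReal_injective
      rw [Complex.ofReal_pow, Complex.ofReal_one]
      exact h2.symm
    nlinarith [norm_nonneg x]
  · intro t ht
    have hU := (uniqueDiffOn_Icc (by norm_num : (0:ℝ) < 1)) t ht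
    rw [(arc_hasDerivAt θ a v t).hasDerivWithinAt.derivWithin hU]
    simp only [inner_add_left, inner_add_right, inner_smul_left, inner_smul_right,
      haa, hvv, hva, hav, Complex.conj_ofReal, mul_zero, mul_one, add_zero, zero_add]
    push_cast
    ring

lemma exists_good_w (n : ℕ) (hn : 2 ≤ n) (p q : EuclideanSpace ℂ (Fin n))
    (hp : ‖p‖ = 1) :
    ∃ w : EuclideanSpace ℂ (Fin n), ‖w‖ = 1 ∧ inner (𝕜 := ℂ) w p = 0 ∧
      ∃ r : ℝ, inner (𝕜 := ℂ) q w = (r : ℂ) := by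
  classical
  have hp0 : p ≠ 0 := by
    intro h; rw [h, norm_zero] at hp; norm_num at hp
  have hne : (ℂ ∙ p)ᗮ ≠ ⊥ := by
    intro hbot
    have htop : (ℂ ∙ p) = ⊤ := Submodule.orthogonal_eq_bot_iff.mp hbot
    have h1 : Module.finrank ℂ (ℂ ∙ p) = 1 := finrank_span_singleton hp0
    rw [htop, finrank_top, finrank_euclideanSpace_fin] at h1
    omega
  obtain ⟨w₀, hw₀mem, hw₀⟩ := Submodule.exists_mem_ne_zero_of_ne_bot hne
  have hpw₀ : inner (𝕜 := ℂ) p w₀ = 0 :=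
    (Submodule.mem_orthogonal _ _).mp hw₀mem p (Submodule.mem_span_singleton_self p)
  have hw₀p : inner (𝕜 := ℂ) w₀ p = 0 := by
    rw [← inner_conj_symm, hpw₀, map_zero]
  set w₁ : EuclideanSpace ℂ (Fin n) := ((‖w₀‖⁻¹ : ℝ) : ℂ) • w₀ with hw₁def
  have hw₁norm : ‖w₁‖ = 1 := by
    rw [hw₁def, norm_smul]
    simp [norm_ne_zero_iff.mpr hw₀]
  have hw₁p : inner (𝕜 := ℂ) w₁ p = 0 := by
    rw [hw₁def, inner_smul_left, hw₀p, mul_zero]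
  set z : ℂ := inner (𝕜 := ℂ) q w₁ with hzdef
  by_cases hz : z = 0
  · exact ⟨w₁, hw₁norm, hw₁p, 0, by rw [← hzdef, hz]; simp⟩
  · refine ⟨(starRingEnd ℂ z / (‖z‖ : ℂ)) • w₁, ?_, ?_, ‖z‖, ?_⟩
    · rw [norm_smul, norm_div, RCLike.norm_conj]
      simp only [hw₁norm, mul_one, Complex.norm_real, Real.norm_eq_abs,
        abs_abs]
      rw [abs_of_nonneg (norm_nonneg z)]
      exact div_self (norm_ne_zero_iff.mpr hz)
    · rw [inner_smul_left, hw₁p, mul_zero]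
    · rw [inner_smul_right, ← hzdef]
      rw [div_mul_eq_mul_div, Complex.conj_mul']
      rw [sq]
      have habs : ((‖z‖ : ℝ) : ℂ) ≠ 0 := by
        exact_mod_cast norm_ne_zero_iff.mpr hz
      rw [mul_div_assoc, div_self habs, mul_one]

/-- For `n ≥ 2`, the distribution of complex tangents on the unit sphere of ℂⁿ is
completely non-integrable within the sphere: any two points of the unit sphere
can be connected by a finite chain of differentiable paths on the sphere tangent
to the complex tangent spaces. -/
theorem sphere_connected_by_complex_tangent_paths
    (n : ℕ) (hn : 2 ≤ n) (p q : EuclideanSpace ℂ (Fin n))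
    (hp : ‖p‖ = 1) (hq : ‖q‖ = 1) :
    ∃ (m : ℕ) (γ : Fin (m + 1) → ℝ → EuclideanSpace ℂ (Fin n)),
      (∀ i, ComplexTangentSpherePath n (γ i)) ∧
      γ 0 0 = p ∧
      (∀ i : Fin m, γ i.castSucc 1 = γ i.succ 0) ∧
      γ (Fin.last m) 1 = q := by
  classical
  obtain ⟨w, hw1, hwp, c, hqw⟩ := exists_good_w n hn p q hp
  have hww : inner (𝕜 := ℂ) w w = 1 := by
    rw [inner_self_eq_norm_sq_to_K, hw1]; norm_num
  have hqq : inner (𝕜 := ℂ) q q = 1 := by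
    rw [inner_self_eq_norm_sq_to_K, hq]; norm_num
  have hwq : inner (𝕜 := ℂ) w q = (c : ℂ) := by
    rw [← inner_conj_symm, hqw, Complex.conj_ofReal]
  have hpw : inner (𝕜 := ℂ) p w = 0 := by
    rw [← inner_conj_symm, hwp, map_zero]
  have hc1 : |c| ≤ 1 := by
    have h := norm_inner_le_norm (𝕜 := ℂ) q w
    rw [hqw, hq, hw1, mul_one, Complex.norm_real, Real.norm_eq_abs] at h
    exact h
  set u : EuclideanSpace ℂ (Fin n) := q - (c : ℂ) • w with hu
  have huw : inner (𝕜 := ℂ) u w = 0 := by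
    rw [hu, inner_sub_left, inner_smul_left, hqw, hww, Complex.conj_ofReal, mul_one, sub_self]
  have huu : inner (𝕜 := ℂ) u u = ((1 - c^2 : ℝ) : ℂ) := by
    rw [hu]
    simp only [inner_sub_left, inner_sub_right, inner_smul_left, inner_smul_right,
      hqq, hww, hqw, hwq, Complex.conj_ofReal]
    push_cast; ring
  have hnu : ‖u‖ = Real.sqrt (1 - c^2) := by
    have h2 := inner_self_eq_norm_sq_to_K (𝕜 := ℂ) u
    rw [huu] at h2
    have h3 : (1 - c^2 : ℝ) = ‖u‖^2 := by
      apply Complex.ofReal_injective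
      rw [Complex.ofReal_pow]
      exact h2
    rw [h3, Real.sqrt_sq (norm_nonneg u)]
  set θ : ℝ := Real.arccos c with hθdef
  have hcθ : Real.cos θ = c := Real.cos_arccos (abs_le.mp hc1).1 (abs_le.mp hc1).2
  have hsθ : Real.sin θ = ‖u‖ := by
    rw [hθdef, Real.sin_arccos]; exact hnu.symm
  set v : EuclideanSpace ℂ (Fin n) := if u = 0 then p else ((‖u‖⁻¹ : ℝ) : ℂ) • u with hv
  have hv1 : ‖v‖ = 1 := by
    by_cases h : u = 0
    · rw [hv, if_pos h]; exact hp
    · rw [hv, if_neg h, norm_smul]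
      simp [norm_ne_zero_iff.mpr h]
  have hvw : inner (𝕜 := ℂ) v w = 0 := by
    by_cases h : u = 0
    · rw [hv, if_pos h]; exact hpw
    · rw [hv, if_neg h, inner_smul_left, huw, mul_zero]
  have hu_eq : ((‖u‖ : ℝ) : ℂ) • v = u := by
    by_cases h : u = 0
    · rw [hv, if_pos h, h, norm_zero]; simp
    · rw [hv, if_neg h, smul_smul]
      have : ((‖u‖ : ℝ) : ℂ) * ((‖u‖⁻¹ : ℝ) : ℂ) = 1 := by
        rw [← Complex.ofReal_mul, mul_inv_cancel₀ (norm_ne_zero_iff.mpr h)]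
        norm_num
      rw [this, one_smul]
  refine ⟨1,
    ![fun t => ((Real.cos (Real.pi / 2 * t) : ℝ) : ℂ) • p +
        ((Real.sin (Real.pi / 2 * t) : ℝ) : ℂ) • w,
      fun t => ((Real.cos (θ * t) : ℝ) : ℂ) • w + ((Real.sin (θ * t) : ℝ) : ℂ) • v],
    ?_, ?_, ?_, ?_⟩
  · intro i
    fin_cases i
    · exact arc_path (Real.pi / 2) p w hp hw1 hwp
    · exact arc_path θ w v hw1 hv1 hvw
  · show ((Real.cos (Real.pi / 2 * 0) : ℝ) : ℂ) • p +
        ((Real.sin (Real.pi / 2 * 0) : ℝ) : ℂ) • w = p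
    simp
  · intro i
    fin_cases i
    show ((Real.cos (Real.pi / 2 * 1) : ℝ) : ℂ) • p +
        ((Real.sin (Real.pi / 2 * 1) : ℝ) : ℂ) • w =
      ((Real.cos (θ * 0) : ℝ) : ℂ) • w + ((Real.sin (θ * 0) : ℝ) : ℂ) • v
    simp
  · show ((Real.cos (θ * 1) : ℝ) : ℂ) • w + ((Real.sin (θ * 1) : ℝ) : ℂ) • v = q
    rw [mul_one, hcθ, hsθ, hu_eq, hu]
    abel
end
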